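/- arXiv:1811.03682 — 2 statements merged into one kernel-verified Lean document; each statement's English description precedes it below -/
import Mathlib

section
/- Let $A = \bigoplus_{e \ge 0} A_e$ be a (possibly noncommutative) graded ring. Let $G_e$ be the subring of $A$ generated by homogeneous elements of degree at most $e$, and let $k_e$ be the minimal number of homogeneous generators of $G_e$. Then $k_e - k_{e-1}$, the minimal number of new degree-$e$ generators, is bounded above by the minimal number of generators of $A_e$ as a left $A_0$-module, and also by the minimal number of generators of $A_e$ as a right $A_0$-module. -/
open scoped DirectSum

variable {A : Type*} [Ring A]

/-- The subring of a graded ring generated by the homogeneous elements of degree ≤ `e`. -/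
def gradedPiecesSubring (𝒜 : ℕ → AddSubgroup A) (e : ℕ) : Subring A :=
  Subring.closure {x | ∃ i ≤ e, x ∈ 𝒜 i}

/-- `k_e`: the minimal number of homogeneous generators of `G_e`, as an extended natural. -/
noncomputable def kGen (𝒜 : ℕ → AddSubgroup A) (e : ℕ) : ℕ∞ :=
  sInf {N : ℕ∞ | ∃ S : Finset A, (S.card : ℕ∞) = N ∧ (∀ x ∈ S, ∃ i, x ∈ 𝒜 i) ∧
    Subring.closure (S : Set A) = gradedPiecesSubring 𝒜 e}

/-- Minimal number of generators of `A_e` as a left `A_0`-module. -/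
noncomputable def muLeft (𝒜 : ℕ → AddSubgroup A) (e : ℕ) : ℕ∞ :=
  sInf {N : ℕ∞ | ∃ S : Finset A, (S.card : ℕ∞) = N ∧ (S : Set A) ⊆ 𝒜 e ∧
    ∀ x ∈ 𝒜 e, x ∈ AddSubgroup.closure {y | ∃ a ∈ 𝒜 0, ∃ s ∈ S, y = a * s}}

/-- Minimal number of generators of `A_e` as a right `A_0`-module. -/
noncomputable def muRight (𝒜 : ℕ → AddSubgroup A) (e : ℕ) : ℕ∞ :=
  sInf {N : ℕ∞ | ∃ S : Finset A, (S.card : ℕ∞) = N ∧ (S : Set A) ⊆ 𝒜 e ∧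
    ∀ x ∈ 𝒜 e, x ∈ AddSubgroup.closure {y | ∃ a ∈ 𝒜 0, ∃ s ∈ S, y = s * a}}

lemma aux_closure (𝒜 : ℕ → AddSubgroup A) (e : ℕ) (he : 1 ≤ e)
    (S T : Set A) (hS : S ⊆ 𝒜 e)
    (hTcl : Subring.closure T = gradedPiecesSubring 𝒜 (e - 1))
    (hgen : ∀ x ∈ 𝒜 e, x ∈ AddSubgroup.closure
      {y | ∃ a ∈ 𝒜 0, ∃ s ∈ S, y = a * s ∨ y = s * a}) :
    Subring.closure (S ∪ T) = gradedPiecesSubring 𝒜 e := by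
  have hTle : gradedPiecesSubring 𝒜 (e - 1) ≤ Subring.closure (S ∪ T) := by
    rw [← hTcl]
    exact Subring.closure_mono Set.subset_union_right
  apply le_antisymm
  · apply Subring.closure_le.2
    rintro x (hx | hx)
    · exact Subring.subset_closure ⟨e, le_rfl, hS hx⟩
    · have : x ∈ gradedPiecesSubring 𝒜 (e - 1) := by
        rw [← hTcl]; exact Subring.subset_closure hx
      refine Subring.closure_mono ?_ this
      rintro y ⟨i, hi, hy⟩
      exact ⟨i, hi.trans (Nat.sub_le e 1), hy⟩
  · apply Subring.closure_le.2
    rintro x ⟨i, hi, hx⟩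
    rcases lt_or_eq_of_le hi with hlt | rfl
    · exact hTle (Subring.subset_closure ⟨i, by omega, hx⟩)
    · have hmem := hgen x hx
      have hsub : {y | ∃ a ∈ 𝒜 0, ∃ s ∈ S, y = a * s ∨ y = s * a} ⊆
          ((Subring.closure (S ∪ T)).toAddSubgroup : Set A) := by
        rintro y ⟨a, ha, s, hs, h | h⟩ <;> subst h
        · exact Subring.mul_mem _ (hTle (Subring.subset_closure ⟨0, by omega, ha⟩))
            (Subring.subset_closure (Or.inl hs))
        · exact Subring.mul_mem _ (Subring.subset_closure (Or.inl hs))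
            (hTle (Subring.subset_closure ⟨0, by omega, ha⟩))
      exact (AddSubgroup.closure_le _).2 hsub hmem

lemma aux_bound (𝒜 : ℕ → AddSubgroup A) (e : ℕ) (he : 1 ≤ e)
    (μ : ℕ∞)
    (hμ : μ ∈ {N : ℕ∞ | ∃ S : Finset A, (S.card : ℕ∞) = N ∧ (S : Set A) ⊆ 𝒜 e ∧
      ∀ x ∈ 𝒜 e, x ∈ AddSubgroup.closure
        {y | ∃ a ∈ 𝒜 0, ∃ s ∈ S, y = a * s ∨ y = s * a}}) :
    kGen 𝒜 e ≤ μ + kGen 𝒜 (e - 1) := by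
  classical
  obtain ⟨S, hScard, hS, hgen⟩ := hμ
  set K := {N : ℕ∞ | ∃ T : Finset A, (T.card : ℕ∞) = N ∧ (∀ x ∈ T, ∃ i, x ∈ 𝒜 i) ∧
    Subring.closure (T : Set A) = gradedPiecesSubring 𝒜 (e - 1)} with hKdef
  rcases Set.eq_empty_or_nonempty K with hK | hK
  · have : kGen 𝒜 (e - 1) = ⊤ := by
      rw [kGen, ← hKdef, hK, sInf_empty]
    rw [this, add_top]
    exact le_top
  · have hmem : sInf K ∈ K := csInf_mem hK
    obtain ⟨T, hTcard, hT, hTcl⟩ := hmem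
    have hcl : Subring.closure ((S ∪ T : Finset A) : Set A) = gradedPiecesSubring 𝒜 e := by
      rw [Finset.coe_union]
      exact aux_closure 𝒜 e he _ _ hS hTcl hgen
    have h1 : kGen 𝒜 e ≤ ((S ∪ T).card : ℕ∞) := by
      apply sInf_le
      refine ⟨S ∪ T, rfl, ?_, hcl⟩
      intro x hx
      rcases Finset.mem_union.1 hx with hx | hx
      · exact ⟨e, hS hx⟩
      · exact hT x hx
    refine h1.trans ?_
    have h2 : ((S ∪ T).card : ℕ∞) ≤ (S.card : ℕ∞) + (T.card : ℕ∞) := by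
      rw [← Nat.cast_add]
      exact_mod_cast Finset.card_union_le S T
    rw [hScard, hTcard] at h2
    exact h2.trans (add_le_add_right (le_refl _) μ) |>.trans
      (by rw [kGen, ← hKdef])

/-- For a (possibly noncommutative) graded ring `A = ⊕ A_e`, the number
`k_e - k_{e-1}` of new degree-`e` generators is bounded by the minimal number of
generators of `A_e` as a left `A_0`-module, and likewise as a right `A_0`-module. -/
theorem stmt9 (𝒜 : ℕ → AddSubgroup A) [GradedRing 𝒜] (e : ℕ) (he : 1 ≤ e) :
    kGen 𝒜 e - kGen 𝒜 (e - 1) ≤ muLeft 𝒜 e ∧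
    kGen 𝒜 e - kGen 𝒜 (e - 1) ≤ muRight 𝒜 e := by
  constructor
  · rw [tsub_le_iff_right]
    rcases Set.eq_empty_or_nonempty {N : ℕ∞ | ∃ S : Finset A, (S.card : ℕ∞) = N ∧
        (S : Set A) ⊆ 𝒜 e ∧ ∀ x ∈ 𝒜 e, x ∈ AddSubgroup.closure
          {y | ∃ a ∈ 𝒜 0, ∃ s ∈ S, y = a * s}} with hM | hM
    · have : muLeft 𝒜 e = ⊤ := by rw [muLeft, hM, sInf_empty]
      rw [this, top_add]; exact le_top
    · have hmem := csInf_mem hM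
      obtain ⟨S, hScard, hS, hgen⟩ := hmem
      have hb := aux_bound 𝒜 e he (sInf _) ⟨S, hScard, hS, fun x hx =>
        AddSubgroup.closure_mono
          (fun y hy => by obtain ⟨a, ha, s, hs, hy⟩ := hy; exact ⟨a, ha, s, hs, Or.inl hy⟩)
          (hgen x hx)⟩
      exact le_trans hb (by rw [muLeft])
  · rw [tsub_le_iff_right]
    rcases Set.eq_empty_or_nonempty {N : ℕ∞ | ∃ S : Finset A, (S.card : ℕ∞) = N ∧
        (S : Set A) ⊆ 𝒜 e ∧ ∀ x ∈ 𝒜 e, x ∈ AddSubgroup.closure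
          {y | ∃ a ∈ 𝒜 0, ∃ s ∈ S, y = s * a}} with hM | hM
    · have : muRight 𝒜 e = ⊤ := by rw [muRight, hM, sInf_empty]
      rw [this, top_add]; exact le_top
    · have hmem := csInf_mem hM
      obtain ⟨S, hScard, hS, hgen⟩ := hmem
      have hb := aux_bound 𝒜 e he (sInf _) ⟨S, hScard, hS, fun x hx =>
        AddSubgroup.closure_mono
          (fun y hy => by obtain ⟨a, ha, s, hs, hy⟩ := hy; exact ⟨a, ha, s, hs, Or.inr hy⟩)
          (hgen x hx)⟩
      exact le_trans hb (by rw [muRight])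
end

section
/- Let $S = k[x_1,\ldots,x_n]_{(x_1,\ldots,x_n)}$ with $k$ an $F$-finite field of characteristic $p$, $I \subseteq S$ an ideal, $R = S/I$, $\mathfrak{m}$ the maximal ideal of $S$, and $\mathcal{D}$ a Cartier subalgebra of $R$ with associated ideals $J_e^{\mathcal{D}} \supseteq I^{[p^e]}$ (so that $\Psi(J_e^{\mathcal{D}}/I^{[p^e]}) = \mathcal{D}_e$ under Fedder's isomorphism). Set $\mathcal{D}_{e,l} = \{\phi \in \mathcal{D}_e : \phi({}^e R) \subseteq \mathfrak{m}^l R\}$. Then $\Psi\big(((\mathfrak{m}^l)^{[p^e]} \cap J_e^{\mathcal{D}} + I^{[p^e]})/I^{[p^e]}\big) = \mathcal{D}_{e,l}$. -/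
open MvPolynomial

set_option synthInstance.maxHeartbeats 1000000
set_option maxHeartbeats 1000000

/-- Dual basis property: `R` admits a finite "dual basis" for `q`-th power maps. -/
def FrobDB (R : Type*) [CommSemiring R] (q : ℕ) : Prop :=
  ∃ (ι : Type) (_ : Fintype ι) (ψ : ι → R →+ R) (b : ι → R),
    (∀ i r x, ψ i (r ^ q * x) = r * ψ i x) ∧
    ∀ x : R, x = ∑ i, (ψ i x) ^ q * b i

theorem FrobDB.of_ringEquiv {R R' : Type*} [CommSemiring R] [CommSemiring R'] {q : ℕ}
    (f : R ≃+* R') (h : FrobDB R q) : FrobDB R' q := by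
  obtain ⟨ι, _, ψ, b, hlin, hexp⟩ := h
  refine ⟨ι, ‹_›, fun i => (f.toAddEquiv.toAddMonoidHom.comp ((ψ i).comp
      f.symm.toAddEquiv.toAddMonoidHom)), fun i => f (b i), ?_, ?_⟩
  · intro i r x
    show f ((ψ i) (f.symm (r ^ q * x))) = r * f ((ψ i) (f.symm x))
    rw [show f.symm (r ^ q * x) = (f.symm r) ^ q * f.symm x by
      rw [map_mul, map_pow], hlin, map_mul, RingEquiv.apply_symm_apply]
  · intro x
    show x = ∑ i : ι, (f ((ψ i) (f.symm x))) ^ q * f (b i)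
    conv_lhs => rw [← f.apply_symm_apply x, hexp (f.symm x)]
    rw [map_sum]
    exact Finset.sum_congr rfl fun i _ => by rw [map_mul, map_pow]

theorem FrobDB.field (k : Type*) [Field k] (p : ℕ) [Fact p.Prime] [CharP k p]
    (hk : (frobenius k p).Finite) (e : ℕ) : FrobDB k (p ^ e) := by
  have hFe : (iterateFrobenius k p e).Finite := by
    induction e with
    | zero => rw [iterateFrobenius_zero]; exact RingHom.Finite.id k
    | succ m ih =>
        have : iterateFrobenius k p (m + 1) =
            (iterateFrobenius k p m).comp (iterateFrobenius k p 1) := by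
          rw [← iterateFrobenius_add]
        rw [this, iterateFrobenius_one]
        exact RingHom.Finite.comp ih hk
  set Fe := iterateFrobenius k p e with hFedef
  have hFeapp : ∀ x : k, Fe x = x ^ p ^ e := fun x => iterateFrobenius_def ..
  set L : Subfield k := Fe.fieldRange with hL
  -- every element of k is an `Fe`-combination of a finite set
  obtain ⟨s, hs0⟩ : ∃ s : Finset k, ∀ x : k, ∃ f : k → k,
      ∑ i ∈ s, Fe (f i) * i = x := by
    letI : Algebra k k := Fe.toAlgebra
    obtain ⟨s, hstop⟩ := hFe.1
    refine ⟨s, fun x => ?_⟩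
    have hx := (@Submodule.eq_top_iff' k k _ _ Fe.toAlgebra.toModule _).mp hstop x
    obtain ⟨f, -, hf⟩ := (@Submodule.mem_span_finset k k _ _ Fe.toAlgebra.toModule s x).1 hx
    exact ⟨f, hf⟩
  have hs : ∀ x : k, x ∈ Submodule.span L (s : Set k) := by
    intro x
    obtain ⟨f, hf⟩ := hs0 x
    rw [← hf]
    refine Submodule.sum_mem _ fun i hi => ?_
    have : Fe (f i) * i = (⟨Fe (f i), ⟨f i, rfl⟩⟩ : L) • i := rfl
    rw [this]
    exact Submodule.smul_mem _ _ (Submodule.subset_span hi)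
  haveI hfin : Module.Finite L k :=
    ⟨⟨s, eq_top_iff.mpr fun x _ => hs x⟩⟩
  set N := Module.finrank L k with hN
  set B : Module.Basis (Fin N) L k := Module.finBasis L k with hB
  -- inverse of Fe on its range
  have hmem : ∀ l : L, ∃ r : k, Fe r = (l : k) := fun l => l.2
  set root : L → k := fun l => (hmem l).choose with hroot
  have hrootspec : ∀ l : L, Fe (root l) = (l : k) := fun l => (hmem l).choose_spec
  have hFeinj : Function.Injective Fe := Fe.injective
  have root_add : ∀ l l' : L, root (l + l') = root l + root l' := by
    intro l l'; apply hFeinj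
    rw [map_add, hrootspec, hrootspec, hrootspec]; rfl
  have root_mul : ∀ l l' : L, root (l * l') = root l * root l' := by
    intro l l'; apply hFeinj
    rw [map_mul, hrootspec, hrootspec, hrootspec]; rfl
  have root_Fe : ∀ r : k, root ⟨Fe r, ⟨r, rfl⟩⟩ = r := by
    intro r; apply hFeinj; rw [hrootspec]
  refine ⟨Fin N, inferInstance, fun j => AddMonoidHom.mk' (fun a => root (B.repr a j)) ?_,
    fun j => B j, ?_, ?_⟩
  · intro a b
    show root (B.repr (a + b) j) = root (B.repr a j) + root (B.repr b j)
    rw [map_add, Finsupp.add_apply, root_add]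
  · intro j r x
    show root (B.repr (r ^ p ^ e * x) j) = r * root (B.repr x j)
    have hsm : r ^ p ^ e * x = (⟨Fe r, ⟨r, rfl⟩⟩ : L) • x := by
      show _ = Fe r * x
      rw [hFeapp]
    rw [hsm, map_smul]
    have : (((⟨Fe r, ⟨r, rfl⟩⟩ : L)) • B.repr x) j
        = (⟨Fe r, ⟨r, rfl⟩⟩ : L) * B.repr x j := rfl
    rw [this, root_mul, root_Fe]
  · intro x
    conv_lhs => rw [← B.sum_repr x]
    refine Finset.sum_congr rfl fun j _ => ?_
    show (B.repr x j : k) * B j = (root (B.repr x j)) ^ p ^ e * B j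
    rw [← hFeapp, hrootspec]

/-- Contraction map on polynomials: keeps coefficients in degrees `≡ t (mod q)`,
applying `ψ` to them. -/
noncomputable def polyPsi {R : Type*} [CommRing R] (q t : ℕ) (ψ : R →+ R) :
    Polynomial R →+ Polynomial R where
  toFun f := f.sum fun m a =>
    if m % q = t then (Polynomial.monomial (m / q)) (ψ a) else 0
  map_zero' := Polynomial.sum_zero_index _
  map_add' f g := Polynomial.sum_add_index f g
    (fun m a => if m % q = t then (Polynomial.monomial (m / q)) (ψ a) else 0)
    (fun i => by beta_reduce; split <;> simp)
    (fun a b₁ b₂ => by beta_reduce; split <;> simp)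

theorem polyPsi_apply {R : Type*} [CommRing R] (q t : ℕ) (ψ : R →+ R) (f : Polynomial R) :
    polyPsi q t ψ f = f.sum fun m a =>
      if m % q = t then (Polynomial.monomial (m / q)) (ψ a) else 0 := rfl

theorem polyPsi_monomial {R : Type*} [CommRing R] (q t : ℕ) (ψ : R →+ R) (M : ℕ) (a : R) :
    polyPsi q t ψ (Polynomial.monomial M a) =
      if M % q = t then (Polynomial.monomial (M / q)) (ψ a) else 0 := by
  rw [polyPsi_apply, Polynomial.sum_monomial_index]
  split <;> simp

theorem polyPsi_qlin {R : Type*} [CommRing R] (p : ℕ) [Fact p.Prime] [CharP R p]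
    (e t : ℕ) (ψ : R →+ R) (hψ : ∀ r x, ψ (r ^ p ^ e * x) = r * ψ x)
    (r f : Polynomial R) :
    polyPsi (p ^ e) t ψ (r ^ p ^ e * f) = r * polyPsi (p ^ e) t ψ f := by
  have hq : 0 < p ^ e := pow_pos (Fact.out : p.Prime).pos e
  induction f using Polynomial.induction_on' with
  | add f g hf hg => rw [mul_add, map_add, map_add, hf, hg, mul_add]
  | monomial M c =>
    induction r using Polynomial.induction_on' with
    | add r₁ r₂ h1 h2 => rw [add_pow_char_pow, add_mul, map_add, h1, h2, add_mul]
    | monomial N d =>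
      rw [Polynomial.monomial_pow, Polynomial.monomial_mul_monomial,
        polyPsi_monomial, polyPsi_monomial]
      rw [show (N * p ^ e + M) % p ^ e = M % p ^ e by
        rw [add_comm, Nat.add_mul_mod_self_right]]
      rw [show (N * p ^ e + M) / p ^ e = N + M / p ^ e by
        rw [add_comm, Nat.add_mul_div_right _ _ hq, add_comm]]
      split
      · rw [hψ, Polynomial.monomial_mul_monomial, add_comm]
      · rw [mul_zero]

theorem FrobDB.polynomial {R : Type*} [CommRing R] (p : ℕ) [Fact p.Prime] [CharP R p]
    (e : ℕ) (h : FrobDB R (p ^ e)) : FrobDB (Polynomial R) (p ^ e) := by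
  classical
  obtain ⟨ι, _, ψ, b, hlin, hexp⟩ := h
  have hq : 0 < p ^ e := pow_pos (Fact.out : p.Prime).pos e
  refine ⟨ι × Fin (p ^ e), inferInstance,
    fun it => polyPsi (p ^ e) (it.2 : ℕ) (ψ it.1),
    fun it => Polynomial.monomial (it.2 : ℕ) (b it.1), ?_, ?_⟩
  · exact fun it r x => polyPsi_qlin p e _ _ (hlin it.1) r x
  · intro f
    induction f using Polynomial.induction_on' with
    | add f g hf hg =>
      conv_lhs => rw [hf, hg]
      rw [← Finset.sum_add_distrib]
      refine Finset.sum_congr rfl fun it _ => ?_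
      rw [map_add, add_pow_char_pow, add_mul]
    | monomial M c =>
      rw [Fintype.sum_prod_type]
      have hstep : ∀ i : ι, (∑ t : Fin (p ^ e),
          (polyPsi (p ^ e) (t : ℕ) (ψ i) (Polynomial.monomial M c)) ^ p ^ e *
            Polynomial.monomial (t : ℕ) (b i)) =
          Polynomial.monomial M ((ψ i c) ^ p ^ e * b i) := by
        intro i
        rw [Finset.sum_eq_single (⟨M % p ^ e, Nat.mod_lt _ hq⟩ : Fin (p ^ e))]
        · rw [polyPsi_monomial, if_pos rfl, Polynomial.monomial_pow,
            Polynomial.monomial_mul_monomial,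
            show M / p ^ e * p ^ e + M % p ^ e = M by rw [mul_comm, Nat.div_add_mod]]
        · intro t _ ht
          rw [polyPsi_monomial, if_neg, zero_pow hq.ne', zero_mul]
          exact fun hc => ht (Fin.ext hc.symm)
        · intro habs; exact absurd (Finset.mem_univ _) habs
      rw [Finset.sum_congr rfl fun i _ => hstep i]
      rw [← map_sum (Polynomial.monomial M), ← hexp c]

theorem FrobDB.mvpoly {k : Type*} [CommRing k] (p : ℕ) [Fact p.Prime] [CharP k p]
    (e n : ℕ) (h : FrobDB k (p ^ e)) : FrobDB (MvPolynomial (Fin n) k) (p ^ e) := by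
  induction n with
  | zero => exact .of_ringEquiv (MvPolynomial.isEmptyRingEquiv k (Fin 0)).symm h
  | succ m ih =>
    exact .of_ringEquiv ((MvPolynomial.finSuccEquiv k m).toRingEquiv).symm
      (FrobDB.polynomial p e ih)

section LocExt

variable {P : Type*} [CommRing P] (M : Submonoid P) (S : Type*) [CommRing S]
  [Algebra P S] [IsLocalization M S]

theorem loc_rep (q : ℕ) (hq : 0 < q) (t : S) :
    ∃ (g : P) (h : M), t * (algebraMap P S) (h : P) ^ q = algebraMap P S g := by
  obtain ⟨⟨g₀, h⟩, eq⟩ := IsLocalization.surj M t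
  refine ⟨g₀ * (h : P) ^ (q - 1), h, ?_⟩
  have hpow : (algebraMap P S) (h : P) ^ q
      = (algebraMap P S) (h : P) * (algebraMap P S) (h : P) ^ (q - 1) := by
    rw [← pow_succ', Nat.sub_add_cancel hq]
  rw [hpow, map_mul, map_pow, ← eq]
  ring

include M in
theorem loc_ext (q : ℕ) (hq : 0 < q) (ψ : P →+ P)
    (hψ : ∀ r x, ψ (r ^ q * x) = r * ψ x) :
    ∃ Ψ : S →+ S, (∀ r x, Ψ (r ^ q * x) = r * Ψ x) ∧
      ∀ g : P, Ψ (algebraMap P S g) = algebraMap P S (ψ g) := by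
  obtain ⟨q', rfl⟩ : ∃ q', q = q' + 1 := ⟨q - 1, (Nat.succ_pred_eq_of_pos hq).symm⟩
  set q := q' + 1
  set A := algebraMap P S with hA
  choose g h hrep using loc_rep M S q hq
  have wd : ∀ (t : S) (g'' : P) (h'' : M), t * A (h'' : P) ^ q = A g'' →
      IsLocalization.mk' S (ψ (g t)) (h t) = IsLocalization.mk' S (ψ g'') h'' := by
    intro t g'' h'' hrep'
    have h1 : A (g t * (h'' : P) ^ q) = A (g'' * ((h t : P)) ^ q) := by
      rw [map_mul, map_mul, map_pow, map_pow, ← hrep t, ← hrep']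
      ring
    obtain ⟨c, hc⟩ := (IsLocalization.eq_iff_exists M S).mp h1
    have key : ((c : P) * (h'' : P)) ^ q * g t = ((c : P) * (h t : P)) ^ q * g'' := by
      linear_combination ((c : P)) ^ q' * hc
    have key2 : ((c : P) * (h'' : P)) * ψ (g t) = ((c : P) * (h t : P)) * ψ g'' := by
      rw [← hψ ((c : P) * (h'' : P)) (g t), ← hψ ((c : P) * (h t : P)) g'', key]
    have hu : IsUnit (A ((c * h t * h'' : M) : P)) := IsLocalization.map_units S _
    apply hu.mul_left_cancel
    have e1 : A ((h t : P)) * IsLocalization.mk' S (ψ (g t)) (h t) = A (ψ (g t)) :=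
      IsLocalization.mk'_spec' S _ _
    have e2 : A ((h'' : P)) * IsLocalization.mk' S (ψ g'') h'' = A (ψ g'') :=
      IsLocalization.mk'_spec' S _ _
    have hcoe : ((c * h t * h'' : M) : P) = (c : P) * (h t : P) * (h'' : P) := rfl
    rw [hcoe, map_mul, map_mul]
    calc A (c : P) * A (h t : P) * A (h'' : P) * IsLocalization.mk' S (ψ (g t)) (h t)
        = A (c : P) * A (h'' : P) * (A ((h t : P)) * IsLocalization.mk' S (ψ (g t)) (h t)) := by
          ring
      _ = A (c : P) * A (h'' : P) * A (ψ (g t)) := by rw [e1]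
      _ = A ((c : P) * (h'' : P) * ψ (g t)) := by rw [map_mul, map_mul]
      _ = A ((c : P) * (h t : P) * ψ g'') := by rw [key2]
      _ = A (c : P) * A (h t : P) * A (ψ g'') := by rw [map_mul, map_mul]
      _ = A (c : P) * A (h t : P) * (A ((h'' : P)) * IsLocalization.mk' S (ψ g'') h'') := by
          rw [e2]
      _ = A (c : P) * A (h t : P) * A (h'' : P) * IsLocalization.mk' S (ψ g'') h'' := by
          ring
  refine ⟨AddMonoidHom.mk' (fun t => IsLocalization.mk' S (ψ (g t)) (h t)) ?_, ?_, ?_⟩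
  · intro t₁ t₂
    show IsLocalization.mk' S (ψ (g (t₁ + t₂))) (h (t₁ + t₂)) = _
    have hrep3 : (t₁ + t₂) * A (((h t₁) * (h t₂) : M) : P) ^ q
        = A (g t₁ * ((h t₂ : P)) ^ q + g t₂ * ((h t₁ : P)) ^ q) := by
      have e1 := hrep t₁
      have e2 := hrep t₂
      have hcoe : (((h t₁) * (h t₂) : M) : P) = (h t₁ : P) * (h t₂ : P) := rfl
      rw [hcoe]
      simp only [map_mul, map_add, map_pow, mul_pow]
      linear_combination (A ((h t₂ : P))) ^ q * e1 + (A ((h t₁ : P))) ^ q * e2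
    rw [wd _ _ _ hrep3]
    have hnum : ψ (g t₁ * ((h t₂ : P)) ^ q + g t₂ * ((h t₁ : P)) ^ q)
        = ψ (g t₁) * (h t₂ : P) + ψ (g t₂) * (h t₁ : P) := by
      rw [map_add, mul_comm (g t₁) _, mul_comm (g t₂) _, hψ, hψ]
      ring
    rw [hnum, IsLocalization.mk'_add]
  · intro r t
    show IsLocalization.mk' S (ψ (g (r ^ q * t))) (h (r ^ q * t))
        = r * IsLocalization.mk' S (ψ (g t)) (h t)
    have hrep4 : (r ^ q * t) * A (((h r) ^ q * (h t) : M) : P) ^ q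
        = A ((g r) ^ q * g t) := by
      have e1 := hrep r
      have e2 := hrep t
      have hcoe : (((h r) ^ q * (h t) : M) : P) = ((h r : P)) ^ q * (h t : P) := rfl
      rw [hcoe]
      simp only [map_mul, map_pow, mul_pow, ← pow_mul]
      calc r ^ q * t * (A ((h r : P)) ^ (q * q) * A ((h t : P)) ^ q)
          = (r * A ((h r : P)) ^ q) ^ q * (t * A ((h t : P)) ^ q) := by
            rw [mul_pow, ← pow_mul]; ring
        _ = A (g r) ^ q * A (g t) := by rw [e1, e2]
    rw [wd _ _ _ hrep4]
    have hnum : ψ ((g r) ^ q * g t) = g r * ψ (g t) := hψ _ _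
    rw [hnum]
    have hr : r = IsLocalization.mk' S (g r) ((h r) ^ q) := by
      rw [IsLocalization.eq_mk'_iff_mul_eq]
      have hcoe : (((h r) ^ q : M) : P) = ((h r : P)) ^ q := rfl
      rw [hcoe, map_pow]
      exact hrep r
    conv_rhs => rw [hr, ← IsLocalization.mk'_mul]
  · intro g0
    have hrep5 : A g0 * A ((1 : M) : P) ^ q = A g0 := by
      simp
    show IsLocalization.mk' S (ψ (g (A g0))) (h (A g0)) = A (ψ g0)
    rw [wd _ _ _ hrep5, IsLocalization.mk'_one]

end LocExt

theorem map_pow_mem_iff {R : Type*} [CommRing R] (I J : Ideal R)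
    (n : ℕ) (y : R ⧸ I) : y ∈ (J ^ n).map (Ideal.Quotient.mk I) ↔ y ∈ J.map (Ideal.Quotient.mk I) ^ n := by
  rw [Ideal.map_pow]

theorem span_pow_image_mem {S : Type*} [CommRing S] (Tr : S →+ S) (q : ℕ)
    (hTr : ∀ r x, Tr (r ^ q * x) = r * Tr x) (a : Ideal S) (t : S)
    (ht : t ∈ Ideal.span ((fun x => x ^ q) '' (a : Set S))) :
    ∀ x, Tr (t * x) ∈ a := by
  refine Submodule.span_induction (p := fun t _ => ∀ x, Tr (t * x) ∈ a)
    ?_ ?_ ?_ ?_ ht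
  · rintro _ ⟨m, hm, rfl⟩ x
    rw [hTr]
    exact Ideal.mul_mem_right _ _ hm
  · intro x; rw [zero_mul, map_zero]; exact zero_mem _
  · intro y z _ _ hy hz x
    rw [add_mul, map_add]
    exact add_mem (hy x) (hz x)
  · intro r y _ hy x
    have hre : r • y * x = y * (r * x) := by rw [smul_eq_mul]; ring
    rw [hre]
    exact hy (r * x)

theorem key_span {k : Type*} [Field k] (p : ℕ) [Fact p.Prime] [CharP k p]
    (hk : (frobenius k p).Finite) (n : ℕ) (m0 : Ideal (MvPolynomial (Fin n) k))
    [m0.IsPrime] (e : ℕ)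
    (Tr : Localization.AtPrime m0 →+ Localization.AtPrime m0)
    (hTrGen : ∀ ψ : Localization.AtPrime m0 →+ Localization.AtPrime m0,
      (∀ r x, ψ (r ^ p ^ e * x) = r * ψ x) → ∃ u, ∀ x, ψ x = Tr (u * x))
    (a : Ideal (Localization.AtPrime m0)) (s : Localization.AtPrime m0)
    (h : ∀ x, Tr (s * x) ∈ a) :
    s ∈ Ideal.span ((fun x => x ^ p ^ e) '' (a : Set (Localization.AtPrime m0))) := by
  classical
  set q := p ^ e with hqdef
  have hq : 0 < q := pow_pos (Fact.out : p.Prime).pos e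
  set A := algebraMap (MvPolynomial (Fin n) k) (Localization.AtPrime m0) with hA
  have hdb : FrobDB (MvPolynomial (Fin n) k) q := FrobDB.mvpoly p e n (FrobDB.field k p hk e)
  obtain ⟨ι, _, ψ, b, hlin, hexp⟩ := hdb
  obtain ⟨gg, hh, hrep⟩ := loc_rep m0.primeCompl (Localization.AtPrime m0) q hq s
  choose Ψ hΨlin hΨcomp using fun i =>
    loc_ext m0.primeCompl (Localization.AtPrime m0) q hq (ψ i) (hlin i)
  choose u hu using fun i => hTrGen (Ψ i) (hΨlin i)
  have hAψ : ∀ i, A (ψ i gg) = A (hh : MvPolynomial (Fin n) k) * Tr (s * u i) := by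
    intro i
    rw [← hΨcomp i gg, ← hrep, mul_comm s (A (hh : MvPolynomial (Fin n) k) ^ q),
      hΨlin i (A (hh : MvPolynomial (Fin n) k)) s, hu i s, mul_comm (u i) s]
  have hsum : s * A (hh : MvPolynomial (Fin n) k) ^ q
      = A (hh : MvPolynomial (Fin n) k) ^ q * ∑ i, Tr (s * u i) ^ q * A (b i) := by
    rw [hrep]
    conv_lhs => rw [hexp gg]
    rw [map_sum, Finset.mul_sum]
    refine Finset.sum_congr rfl fun i _ => ?_
    rw [map_mul, map_pow, hAψ i, mul_pow]
    ring
  have hcancel : s = ∑ i, Tr (s * u i) ^ q * A (b i) := by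
    have hun : IsUnit (A (hh : MvPolynomial (Fin n) k) ^ q) :=
      (IsLocalization.map_units (Localization.AtPrime m0) hh).pow q
    apply hun.mul_left_cancel
    rw [mul_comm (A (hh : MvPolynomial (Fin n) k) ^ q) s]
    exact hsum
  rw [hcancel]
  refine Ideal.sum_mem _ fun i _ => Ideal.mul_mem_right _ _ ?_
  exact Ideal.subset_span ⟨Tr (s * u i), h (u i), rfl⟩

/-- Let `S = k[x₁,…,xₙ]_{(x₁,…,xₙ)}` with `k` `F`-finite of
characteristic `p`, `I ⊆ S` an ideal, `R = S/I`, `𝔪` the maximal ideal of `S`, and `𝒟` a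
Cartier subalgebra with associated ideals `J_e^𝒟 ⊇ I^{[pᵉ]}` (so that
`Ψ(J_e^𝒟/I^{[pᵉ]}) = 𝒟_e` under Fedder's isomorphism `Ψ(s̄) = Tr(s·-)‾`).  With
`𝒟_{e,l} = {φ ∈ 𝒟_e : φ(ᵉR) ⊆ 𝔪^l R}`, one has
`Ψ(((𝔪^l)^{[pᵉ]} ∩ J_e^𝒟 + I^{[pᵉ]})/I^{[pᵉ]}) = 𝒟_{e,l}`. -/
theorem stmt13 {k : Type*} [Field k] (p : ℕ) [Fact p.Prime] [CharP k p]
    (hk : (frobenius k p).Finite) (n : ℕ)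
    (m0 : Ideal (MvPolynomial (Fin n) k))
    (hm0 : m0 = Ideal.span (Set.range (MvPolynomial.X (R := k) (σ := Fin n))))
    [m0.IsPrime] [CharP (Localization.AtPrime m0) p]
    (I : Ideal (Localization.AtPrime m0)) (e l : ℕ)
    (Tr : Localization.AtPrime m0 →+ Localization.AtPrime m0)
    (hTr : ∀ r x, Tr (r ^ p ^ e * x) = r * Tr x)
    (hTrGen : ∀ ψ : Localization.AtPrime m0 →+ Localization.AtPrime m0,
      (∀ r x, ψ (r ^ p ^ e * x) = r * ψ x) → ∃ u, ∀ x, ψ x = Tr (u * x))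
    -- `Fpow = I^{[pᵉ]}`, `J = J_e^𝒟`, `De = 𝒟_e`
    (Fpow : Ideal (Localization.AtPrime m0))
    (hFpow : Fpow = Ideal.span ((fun x => x ^ p ^ e) '' (I : Set (Localization.AtPrime m0))))
    (J : Ideal (Localization.AtPrime m0))
    (hJ1 : Fpow ≤ J) (hJ2 : J ≤ Submodule.colon Fpow I)
    (De : Set ((Localization.AtPrime m0 ⧸ I) →+ (Localization.AtPrime m0 ⧸ I)))
    (hDe : De = {φ | ∃ s ∈ J, ∀ x, φ (Ideal.Quotient.mk I x) = Ideal.Quotient.mk I (Tr (s * x))}) :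
    ∀ φ ∈ De,
      ((∀ x, φ x ∈ ((IsLocalRing.maximalIdeal (Localization.AtPrime m0)).map
          (Ideal.Quotient.mk I)) ^ l) ↔
        ∃ s ∈ Ideal.span ((fun x => x ^ p ^ e) ''
              ((IsLocalRing.maximalIdeal (Localization.AtPrime m0) ^ l : Ideal _) :
                Set (Localization.AtPrime m0))) ⊓ J + Fpow,
          ∀ x, φ (Ideal.Quotient.mk I x) = Ideal.Quotient.mk I (Tr (s * x))) := by
  intro φ hφmem
  rw [hDe] at hφmem
  obtain ⟨s₀, hs₀J, hφ⟩ := hφmem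
  set q := p ^ e with hqdef
  set mI := Ideal.Quotient.mk I with hmI
  set 𝔪 := IsLocalRing.maximalIdeal (Localization.AtPrime m0) with h𝔪
  constructor
  · intro hmem
    have h1 : ∀ x : Localization.AtPrime m0, Tr (s₀ * x) ∈ 𝔪 ^ l ⊔ I := by
      intro x
      have h2 : mI (Tr (s₀ * x)) ∈ (𝔪.map mI) ^ l := by rw [← hφ x]; exact hmem _
      replace h2 := (map_pow_mem_iff I 𝔪 l _).2 h2
      obtain ⟨y, hy, hyx⟩ :=
        (Ideal.mem_map_iff_of_surjective mI Ideal.Quotient.mk_surjective).mp h2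
      have hsub : Tr (s₀ * x) - y ∈ I := by
        have := Ideal.Quotient.eq.mp hyx
        simpa using (I.neg_mem this)
      have hdec : Tr (s₀ * x) = y + (Tr (s₀ * x) - y) := by ring
      rw [hdec]
      exact Submodule.add_mem _ (Ideal.mem_sup_left hy) (Ideal.mem_sup_right hsub)
    have h3 : s₀ ∈ Ideal.span ((fun x => x ^ q) '' ((𝔪 ^ l ⊔ I : Ideal (Localization.AtPrime m0)) : Set (Localization.AtPrime m0))) :=
      key_span p hk n m0 e Tr hTrGen _ s₀ h1
    have h4 : Ideal.span ((fun x => x ^ q) '' ((𝔪 ^ l ⊔ I : Ideal (Localization.AtPrime m0)) : Set (Localization.AtPrime m0))) ≤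
        Ideal.span ((fun x => x ^ q) '' ((𝔪 ^ l : Ideal (Localization.AtPrime m0)) : Set (Localization.AtPrime m0))) ⊔ Fpow := by
      rw [Ideal.span_le]
      rintro _ ⟨y, hy, rfl⟩
      obtain ⟨y₁, hy₁, y₂, hy₂, rfl⟩ := Submodule.mem_sup.mp hy
      show (y₁ + y₂) ^ q ∈ _
      rw [hqdef, add_pow_char_pow]
      refine Submodule.add_mem _ ?_ ?_
      · exact Ideal.mem_sup_left (Ideal.subset_span ⟨y₁, hy₁, rfl⟩)
      · exact Ideal.mem_sup_right (hFpow ▸ Ideal.subset_span ⟨y₂, hy₂, rfl⟩)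
    obtain ⟨t, ht, f, hf, hsum⟩ := Submodule.mem_sup.mp (h4 h3)
    refine ⟨s₀, ?_, hφ⟩
    have htJ : t ∈ J := by
      have hteq : t = s₀ - f := by rw [← hsum]; ring
      rw [hteq]
      exact Submodule.sub_mem _ hs₀J (hJ1 hf)
    rw [Submodule.add_eq_sup]
    rw [← hsum]
    exact Submodule.add_mem _ (Ideal.mem_sup_left (Submodule.mem_inf.mpr ⟨ht, htJ⟩))
      (Ideal.mem_sup_right hf)
  · rintro ⟨s, hsmem, hφ'⟩
    intro y
    obtain ⟨x, rfl⟩ := Ideal.Quotient.mk_surjective y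
    rw [show (Ideal.Quotient.mk I) x = mI x from rfl, hφ' x]
    rw [Submodule.add_eq_sup] at hsmem
    obtain ⟨t, ht, f, hf, rfl⟩ := Submodule.mem_sup.mp hsmem
    have hT1 : Tr (t * x) ∈ 𝔪 ^ l :=
      span_pow_image_mem Tr q hTr (𝔪 ^ l) t (Submodule.mem_inf.mp ht).1 x
    have hT2 : Tr (f * x) ∈ I :=
      span_pow_image_mem Tr q hTr I f (hFpow ▸ hf) x
    have hsplit : Tr ((t + f) * x) = Tr (t * x) + Tr (f * x) := by
      rw [add_mul, map_add]
    rw [hsplit, map_add]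
    have e2 : mI (Tr (f * x)) = 0 := Ideal.Quotient.eq_zero_iff_mem.mpr hT2
    rw [e2, add_zero]; refine (map_pow_mem_iff I 𝔪 l _).1 ?_
    exact Ideal.mem_map_of_mem _ hT1
end
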